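/- For unit vectors a, b in a finite-dimensional complex inner product space, the Hermitian operator |a⟩⟨a| − |b⟩⟨b| has trace norm 2√(1 − |⟨a, b⟩|²); precisely, the trace of the positive semidefinite square root of (|a⟩⟨a| − |b⟩⟨b|)² equals 2√(1 − |⟨a, b⟩|²). Equivalently, (1/2)‖ |a⟩⟨a| − |b⟩⟨b| ‖₁ = √(1 − |⟨a, b⟩|²). -/

import Mathlib

open scoped InnerProductSpace ComplexConjugate

/-- For unit vectors `a, b` in a finite-dimensional complex inner product space,
the Hermitian operator `T = |a⟩⟨a| − |b⟩⟨b|` has trace norm `2√(1 − |⟨a,b⟩|²)`: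
the trace of the positive semidefinite square root `S` of `T†T = T²` equals
`2√(1 − |⟨a,b⟩|²)`, i.e. `(1/2)‖ |a⟩⟨a| − |b⟩⟨b| ‖₁ = √(1 − |⟨a,b⟩|²)`. -/
theorem stmt_11 (H : Type*) [NormedAddCommGroup H] [InnerProductSpace ℂ H]
    [FiniteDimensional ℂ H]
    (a b : H) (ha : ‖a‖ = 1) (hb : ‖b‖ = 1)
    (T : H →ₗ[ℂ] H)
    (hT : T = (innerₛₗ ℂ a).smulRight a - (innerₛₗ ℂ b).smulRight b)
    (S : H →ₗ[ℂ] H)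
    (hSsym : S.IsSymmetric)
    (hSpos : ∀ x : H, 0 ≤ (inner ℂ x (S x) : ℂ).re)
    (hSsq : S * S = T * T) :
    LinearMap.trace ℂ H S
      = ((2 * Real.sqrt (1 - ‖(inner ℂ a b : ℂ)‖ ^ 2) : ℝ) : ℂ) := by
  have key_trace : ∀ (f : H →ₗ[ℂ] ℂ) (w : H),
      LinearMap.trace ℂ H (f.smulRight w) = f w := by
    intro f w
    have h : f.smulRight w = dualTensorHom ℂ H H (f ⊗ₜ w) := by ext x; simp
    rw [h, LinearMap.trace_eq_contract_apply, contractLeft_apply]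
  set c : ℂ := (inner ℂ a b : ℂ) with hc
  set t : ℝ := 1 - ‖c‖ ^ 2 with htdef
  have ha' : (inner ℂ a a : ℂ) = 1 := by
    rw [inner_self_eq_norm_sq_to_K, ha]; norm_num
  have hb' : (inner ℂ b b : ℂ) = 1 := by
    rw [inner_self_eq_norm_sq_to_K, hb]; norm_num
  have hba : (inner ℂ b a : ℂ) = conj c := by rw [hc, inner_conj_symm]
  have hcc : c * conj c = ((‖c‖ ^ 2 : ℝ) : ℂ) := by
    rw [Complex.mul_conj, Complex.sq_norm]
  have htC : ((t : ℝ) : ℂ) = 1 - c * conj c := by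
    rw [htdef]; push_cast; rw [hcc]; push_cast; ring
  have ht0 : 0 ≤ t := by
    have h1 : ‖c‖ ≤ 1 := by
      have h2 := norm_inner_le_norm (𝕜 := ℂ) a b
      rw [ha, hb] at h2
      simpa [hc] using h2
    have h3 : ‖c‖ ^ 2 ≤ 1 := by
      nlinarith [norm_nonneg c]
    rw [htdef]; linarith
  have hTx : ∀ x, T x = (inner ℂ a x : ℂ) • a - (inner ℂ b x : ℂ) • b := by
    intro x; simp [hT]
  have hTsym : T.IsSymmetric := by
    intro x y
    simp only [hTx, inner_sub_left, inner_sub_right, inner_smul_left, inner_smul_right,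
      inner_conj_symm]
    ring
  set u : H := a - conj c • b with hu
  set v : H := c • a - b with hv
  have hT2 : T * T = (innerₛₗ ℂ a).smulRight u - (innerₛₗ ℂ b).smulRight v := by
    ext x
    simp only [Module.End.mul_apply, LinearMap.sub_apply, LinearMap.smulRight_apply,
      innerₛₗ_apply_apply, hTx, inner_sub_right, inner_smul_right, ha', hb', hba, hc, hu, hv]
    module
  have hT2x : ∀ x, (T * T) x = (inner ℂ a x : ℂ) • u - (inner ℂ b x : ℂ) • v := by
    intro x; rw [hT2]; simp
  have hau : (inner ℂ a u : ℂ) = ((t : ℝ) : ℂ) := by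
    simp only [hu, inner_sub_right, inner_smul_right, ha', htC, hc]
    ring
  have hbu : (inner ℂ b u : ℂ) = 0 := by
    simp only [hu, inner_sub_right, inner_smul_right, hb', hba]
    ring
  have hav : (inner ℂ a v : ℂ) = 0 := by
    simp only [hv, inner_sub_right, inner_smul_right, ha', hc]
    ring
  have hbv : (inner ℂ b v : ℂ) = -((t : ℝ) : ℂ) := by
    simp only [hv, inner_sub_right, inner_smul_right, hb', hba, htC]
    ring
  rcases eq_or_lt_of_le ht0 with hteq | htpos
  · -- degenerate case : t = 0, i.e. |⟨a,b⟩| = 1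
    have ht0' : t = 0 := hteq.symm
    have htC0 : (1 : ℂ) - c * conj c = 0 := by
      rw [← htC, ht0']; simp
    have hu0 : u = 0 := by
      rw [← inner_self_eq_zero (𝕜 := ℂ)]
      simp only [hu, inner_sub_left, inner_sub_right, inner_smul_left, inner_smul_right,
        ha', hb', hc, hba, RingHom.id_apply, starRingEnd_self_apply]
      rw [← hc]
      linear_combination htC0
    have hv0 : v = 0 := by
      rw [← inner_self_eq_zero (𝕜 := ℂ)]
      simp only [hv, inner_sub_left, inner_sub_right, inner_smul_left, inner_smul_right,
        ha', hb', hc, hba, RingHom.id_apply, starRingEnd_self_apply]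
      rw [← hc]
      linear_combination htC0
    have hTT0 : T * T = 0 := by
      ext x
      rw [hT2x, hu0, hv0]
      simp
    have hS0 : S = 0 := by
      ext x
      have h1 : (inner ℂ (S x) (S x) : ℂ) = 0 := by
        rw [hSsym x (S x)]
        have h2 : S (S x) = 0 := by
          have e1 := LinearMap.ext_iff.mp hSsq x
          have e2 := LinearMap.ext_iff.mp hTT0 x
          simp only [Module.End.mul_apply, LinearMap.zero_apply] at e1 e2
          rw [e1, e2]
        rw [h2, inner_zero_right]
      simpa using inner_self_eq_zero.mp h1
    rw [hS0]
    have : Real.sqrt t = 0 := by rw [ht0']; exact Real.sqrt_zero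
    rw [htdef] at this
    rw [this]
    simp
  · -- main case : t > 0
    have h4 : (T * T) * (T * T) = ((t : ℝ) : ℂ) • (T * T) := by
      ext x
      rw [Module.End.mul_apply, LinearMap.smul_apply, hT2x x, hT2x]
      simp only [inner_sub_right, inner_smul_right, hau, hbu, hav, hbv]
      module
    set r : ℝ := Real.sqrt t with hrdef
    have hr : 0 < r := Real.sqrt_pos.mpr htpos
    have hr2 : r ^ 2 = t := Real.sq_sqrt htpos.le
    set κ : ℂ := ((r : ℝ) : ℂ)⁻¹ with hκ
    set S' : H →ₗ[ℂ] H := κ • (T * T) with hS'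
    have hS'sq : S' * S' = T * T := by
      rw [hS', smul_mul_assoc, mul_smul_comm, smul_smul, h4, smul_smul]
      have h5 : κ * κ * ((t : ℝ) : ℂ) = 1 := by
        rw [hκ, ← hr2]
        push_cast
        rw [sq]
        field_simp
        have : ((r : ℝ) : ℂ) * ((r : ℝ) : ℂ) ≠ 0 := by
          simp [Complex.ofReal_ne_zero, hr.ne']
        exact div_self (Complex.ofReal_ne_zero.mpr hr.ne')
      rw [h5, one_smul]
    have hcomm : S * S' = S' * S := by
      rw [hS', mul_smul_comm, smul_mul_assoc, ← hSsq, ← mul_assoc, mul_assoc]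
    have hz : (S + S') * (S - S') = 0 := by
      have e : (S + S') * (S - S') = S * S - S' * S' + (S' * S - S * S') := by
        noncomm_ring
      rw [e, hcomm, hSsq, hS'sq]
      simp
    have key : ∀ x, (S - S') ((S - S') x) = 0 := by
      intro x
      set y := (S - S') x with hy
      have h1 : (S + S') y = 0 := by
        have := LinearMap.ext_iff.mp hz x
        simpa [Module.End.mul_apply, ← hy] using this
      have hy0 : (inner ℂ y (S y) : ℂ) + (inner ℂ y (S' y) : ℂ) = 0 := by
        rw [← inner_add_right, ← LinearMap.add_apply, h1, inner_zero_right]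
      have hS'rep : (inner ℂ y (S' y) : ℂ) = κ * ((‖T y‖ : ℝ) : ℂ) ^ 2 := by
        rw [hS']
        simp only [LinearMap.smul_apply, inner_smul_right, Module.End.mul_apply]
        rw [← hTsym y (T y), inner_self_eq_norm_sq_to_K]
        norm_cast
      have hS're : (inner ℂ y (S' y) : ℂ).re = r⁻¹ * ‖T y‖ ^ 2 := by
        have e : κ * ((‖T y‖ : ℝ) : ℂ) ^ 2 = (((r⁻¹ * ‖T y‖ ^ 2 : ℝ)) : ℂ) := by
          rw [hκ]; push_cast; ring
        rw [hS'rep, e, Complex.ofReal_re]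
      have hre0 : (inner ℂ y (S y) : ℂ).re + (inner ℂ y (S' y) : ℂ).re = 0 := by
        have := congrArg Complex.re hy0
        simpa using this
      have hTy : T y = 0 := by
        have h2 : 0 ≤ (inner ℂ y (S' y) : ℂ).re := by rw [hS're]; positivity
        have h3 : (inner ℂ y (S' y) : ℂ).re = 0 := by
          have := hSpos y
          linarith
        rw [hS're] at h3
        have h6 : ‖T y‖ ^ 2 = 0 := by
          have hrinv : (0 : ℝ) < r⁻¹ := by positivity
          nlinarith
        simpa [pow_eq_zero_iff] using h6
      have hS'y : S' y = 0 := by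
        rw [hS']
        simp [Module.End.mul_apply, hTy]
      have hSy : S y = 0 := by
        have h7 : (inner ℂ (S y) (S y) : ℂ) = 0 := by
          rw [hSsym y (S y)]
          have h8 : S (S y) = 0 := by
            have := LinearMap.ext_iff.mp hSsq y
            simp only [Module.End.mul_apply] at this
            rw [this, hTy]
            simp
          rw [h8, inner_zero_right]
        exact inner_self_eq_zero.mp h7
      simp [LinearMap.sub_apply, hSy, hS'y]
    have hDsym : (S - S').IsSymmetric := by
      apply hSsym.sub
      intro x y
      rw [hS']
      simp only [LinearMap.smul_apply, inner_smul_left, inner_smul_right, Module.End.mul_apply]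
      rw [hκ, ← hTsym x (T y), hTsym (T x) y]
      simp [Complex.conj_ofReal]
    have hSS' : S = S' := by
      have h9 : S - S' = 0 := by
        ext x
        have h0 : (inner ℂ ((S - S') x) ((S - S') x) : ℂ) = 0 := by
          rw [hDsym x ((S - S') x), key x, inner_zero_right]
        simpa using inner_self_eq_zero.mp h0
      exact sub_eq_zero.mp h9
    rw [hSS', hS', map_smul, hT2, map_sub, key_trace, key_trace, innerₛₗ_apply_apply,
      innerₛₗ_apply_apply, hau, hbv]
    rw [hκ]
    have : ((t : ℝ) : ℂ) - -((t : ℝ) : ℂ) = ((2 * t : ℝ) : ℂ) := by push_cast; ring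
    rw [smul_eq_mul, this, ← hr2]
    push_cast
    have hrne : ((r : ℝ) : ℂ) ≠ 0 := by simp [Complex.ofReal_ne_zero, hr.ne']
    field_simp
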